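/- Let α : 𝔤 → 𝔤 be a Lie algebra involution with fixed subalgebra 𝔥 (on which the Killing form B is nondegenerate), ρ : 𝔤 → End(ℂ^d) a faithful representation with Tr(ρ(X)ρ(Y)) = c·B(X,Y), c ≠ 0, and let (X_a) be a basis of 𝔥 with B|𝔥-dual basis (X^a). Set C^{(𝔥)} := Σ_a ρ(X_a) ⊗ ρ(X^a) ∈ End(ℂ^d⊗ℂ^d). Decompose End(ℂ^d) = ρ(𝔥) ⊕ W̄ orthogonally for the trace form, and let k̃ ∈ End(ℂ^d) ⊗ End(ℂ^{d_B}) be written uniquely as k̃ = Σ_a ρ(X_a) ⊗ Z^a + Σ_i w̄_i ⊗ Z̄^i with (w̄_i) a trace-orthonormal basis of W̄. If k̃ satisfies 2·[C^{(𝔥)}₁₂, k̃₂₃] + [k̃₁₃, k̃₂₃] = 0 in End(ℂ^d ⊗ ℂ^d ⊗ ℂ^{d_B}), then: (i) the linear map φ : 𝔥 → End(ℂ^{d_B}) determined by φ(X^a) = (1/2)·Z^a is a Lie algebra homomorphism; (ii) [Z̄^i, Z^a] = 0 for all i, a; (iii) [Z̄^i, Z̄^j] = 0 for all i, j. -/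

import Mathlib

open Kronecker

attribute [local instance 100] LieRing.ofAssociativeRing


namespace Stmt18Aux

variable {d dB : ℕ}

lemma sum_comm4 {β : Type*} [AddCommMonoid β] (f : Fin d → Fin d → Fin d → Fin d → β) :
    ∑ p, ∑ q, ∑ r, ∑ s, f p q r s = ∑ r, ∑ s, ∑ p, ∑ q, f p q r s := by
  conv_lhs => enter [2, p]; rw [Finset.sum_comm]
  rw [Finset.sum_comm]
  conv_lhs => enter [2, r, 2, p]; rw [Finset.sum_comm]
  conv_lhs => enter [2, r]; rw [Finset.sum_comm]

noncomputable def extr (M N : Matrix (Fin d) (Fin d) ℂ) :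
    Matrix ((Fin d × Fin d) × Fin dB) ((Fin d × Fin d) × Fin dB) ℂ →ₗ[ℂ]
      Matrix (Fin dB) (Fin dB) ℂ where
  toFun T := Matrix.of fun k l => ∑ p : Fin d, ∑ q : Fin d, ∑ r : Fin d, ∑ s : Fin d,
      M q p * N s r * T ((p, r), k) ((q, s), l)
  map_add' T U := by
    ext k l
    simp [mul_add, Finset.sum_add_distrib]
  map_smul' t T := by
    ext k l
    simp [Finset.mul_sum, mul_left_comm]

lemma sum_kronecker {ι n m p q : Type*} (s : Finset ι) (A : ι → Matrix n m ℂ)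
    (B : Matrix p q ℂ) :
    (∑ i ∈ s, A i) ⊗ₖ B = ∑ i ∈ s, (A i) ⊗ₖ B := by
  ext ⟨a, b⟩ ⟨e, f⟩
  simp [Matrix.kroneckerMap_apply, Matrix.sum_apply, Finset.sum_mul]

lemma extr_kron (M N A B : Matrix (Fin d) (Fin d) ℂ) (Y : Matrix (Fin dB) (Fin dB) ℂ) :
    extr M N ((A ⊗ₖ B) ⊗ₖ Y) = (Matrix.trace (M * A) * Matrix.trace (N * B)) • Y := by
  ext k l
  simp only [extr, LinearMap.coe_mk, AddHom.coe_mk, Matrix.of_apply,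
    Matrix.kroneckerMap_apply, Matrix.smul_apply, smul_eq_mul]
  rw [Matrix.trace_mul_comm M A, Matrix.trace_mul_comm N B,
    show Matrix.trace (A * M) = ∑ p, ∑ q, A p q * M q p by
      simp [Matrix.trace, Matrix.mul_apply, Matrix.diag],
    show Matrix.trace (B * N) = ∑ r, ∑ s, B r s * N s r by
      simp [Matrix.trace, Matrix.mul_apply, Matrix.diag]]
  simp only [Finset.sum_mul, Finset.mul_sum]
  conv_rhs => rw [sum_comm4]
  refine Finset.sum_congr rfl fun p _ => Finset.sum_congr rfl fun q _ =>
    Finset.sum_congr rfl fun r _ => Finset.sum_congr rfl fun s _ => by ring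

end Stmt18Aux



/-- let `α` be an involution with fixed subalgebra `𝔥` (with `B|𝔥`
nondegenerate), `(X_a)` a basis of `𝔥` with `B|𝔥`-dual basis `(X^a)`,
`C^{(𝔥)} = Σ_a ρ(X_a) ⊗ ρ(X^a)`, and `k̃ = Σ_a ρ(X_a)⊗Z^a + Σ_i w̄_i⊗Z̄^i` with `(w̄_i)` a
trace-orthonormal basis of the trace-orthocomplement `W̄` of `ρ(𝔥)`. If
`2[C^{(𝔥)}₁₂, k̃₂₃] + [k̃₁₃, k̃₂₃] = 0`, then `X^a ↦ (1/2)Z^a` extends to a Lie algebra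
homomorphism of `𝔥`, and the `Z̄^i` commute with the `Z^a` and with each other. -/
theorem stmt_18 {L : Type*} [LieRing L] [LieAlgebra ℂ L] [FiniteDimensional ℂ L]
    [LieAlgebra.IsSimple ℂ L]
    (hB : LinearMap.BilinForm.Nondegenerate (killingForm ℂ L))
    (α : L →ₗ⁅ℂ⁆ L) (hα : ∀ X : L, α (α X) = X)
    {d dB : ℕ} (ρ : L →ₗ⁅ℂ⁆ Matrix (Fin d) (Fin d) ℂ)
    (hρ : Function.Injective ρ)
    (c : ℂ) (hc : c ≠ 0)
    (htr : ∀ X Y : L, Matrix.trace (ρ X * ρ Y) = c * killingForm ℂ L X Y)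
    -- a basis of the fixed subalgebra 𝔥 together with its `B|𝔥`-dual basis
    {ιh : Type*} [Fintype ιh] [DecidableEq ιh] (Xa : ιh → L) (Xd : ιh → L)
    (hXafix : ∀ a, α (Xa a) = Xa a) (hXdfix : ∀ a, α (Xd a) = Xd a)
    (hindep : LinearIndependent ℂ Xa)
    (hspan : ∀ X : L, α X = X ↔ X ∈ Submodule.span ℂ (Set.range Xa))
    (hdual : ∀ a b : ιh, killingForm ℂ L (Xa a) (Xd b) = if a = b then 1 else 0)
    -- a trace-orthonormal basis of the trace-orthocomplement `W̄` of `ρ(𝔥)` in `End(ℂ^d)`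
    {ιw : Type*} [Fintype ιw] [DecidableEq ιw] (wbar : ιw → Matrix (Fin d) (Fin d) ℂ)
    (horth : ∀ (i : ιw) (X : L), α X = X → Matrix.trace (ρ X * wbar i) = 0)
    (honb : ∀ i j : ιw, Matrix.trace (wbar i * wbar j) = if i = j then 1 else 0)
    (hcompl : Submodule.span ℂ (Set.range (fun a => ρ (Xa a)) ∪ Set.range wbar) = ⊤)
    -- the components of `k̃` in End(ℂ^{d_B})
    (Z : ιh → Matrix (Fin dB) (Fin dB) ℂ) (Zbar : ιw → Matrix (Fin dB) (Fin dB) ℂ)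
    -- the hypothesis `2[C^{(𝔥)}₁₂, k̃₂₃] + [k̃₁₃, k̃₂₃] = 0`
    (hmain :
      (2 : ℂ) • (((∑ a : ιh, ρ (Xa a) ⊗ₖ ρ (Xd a)) ⊗ₖ (1 : Matrix (Fin dB) (Fin dB) ℂ)) *
            (∑ a : ιh, ((1 : Matrix (Fin d) (Fin d) ℂ) ⊗ₖ ρ (Xa a)) ⊗ₖ Z a +
              ∑ i : ιw, ((1 : Matrix (Fin d) (Fin d) ℂ) ⊗ₖ wbar i) ⊗ₖ Zbar i) -
          (∑ a : ιh, ((1 : Matrix (Fin d) (Fin d) ℂ) ⊗ₖ ρ (Xa a)) ⊗ₖ Z a +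
              ∑ i : ιw, ((1 : Matrix (Fin d) (Fin d) ℂ) ⊗ₖ wbar i) ⊗ₖ Zbar i) *
            ((∑ a : ιh, ρ (Xa a) ⊗ₖ ρ (Xd a)) ⊗ₖ (1 : Matrix (Fin dB) (Fin dB) ℂ))) +
        ((∑ a : ιh, (ρ (Xa a) ⊗ₖ (1 : Matrix (Fin d) (Fin d) ℂ)) ⊗ₖ Z a +
              ∑ i : ιw, (wbar i ⊗ₖ (1 : Matrix (Fin d) (Fin d) ℂ)) ⊗ₖ Zbar i) *
            (∑ a : ιh, ((1 : Matrix (Fin d) (Fin d) ℂ) ⊗ₖ ρ (Xa a)) ⊗ₖ Z a +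
              ∑ i : ιw, ((1 : Matrix (Fin d) (Fin d) ℂ) ⊗ₖ wbar i) ⊗ₖ Zbar i) -
          (∑ a : ιh, ((1 : Matrix (Fin d) (Fin d) ℂ) ⊗ₖ ρ (Xa a)) ⊗ₖ Z a +
              ∑ i : ιw, ((1 : Matrix (Fin d) (Fin d) ℂ) ⊗ₖ wbar i) ⊗ₖ Zbar i) *
            (∑ a : ιh, (ρ (Xa a) ⊗ₖ (1 : Matrix (Fin d) (Fin d) ℂ)) ⊗ₖ Z a +
              ∑ i : ιw, (wbar i ⊗ₖ (1 : Matrix (Fin d) (Fin d) ℂ)) ⊗ₖ Zbar i)) = 0) :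
    (∃ φ : L →ₗ[ℂ] Matrix (Fin dB) (Fin dB) ℂ,
      (∀ a : ιh, φ (Xd a) = (1 / 2 : ℂ) • Z a) ∧
        (∀ X Y : L, α X = X → α Y = Y → φ ⁅X, Y⁆ = φ X * φ Y - φ Y * φ X)) ∧
      (∀ (i : ιw) (a : ιh), Zbar i * Z a = Z a * Zbar i) ∧
      (∀ i j : ιw, Zbar i * Zbar j = Zbar j * Zbar i) := by
  classical
  have key := fun (M N : Matrix (Fin d) (Fin d) ℂ) => congrArg (Stmt18Aux.extr M N) hmain
  simp only [map_zero, Stmt18Aux.sum_kronecker, Finset.sum_mul, Finset.mul_sum, add_mul, mul_add,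
    sub_mul, mul_sub, ← Matrix.mul_kronecker_mul, Matrix.mul_one, Matrix.one_mul, map_sum, map_add,
    map_sub, _root_.map_smul, Stmt18Aux.extr_kron] at key
  have t1 : ∀ b a, (ρ (Xd b) * ρ (Xa a)).trace = c * (if a = b then (1:ℂ) else 0) := fun b a => by
    rw [Matrix.trace_mul_comm, htr, hdual]
  have t2 : ∀ b i, (ρ (Xd b) * wbar i).trace = 0 := fun b i => horth i _ (hXdfix b)
  have t3 : ∀ k a, (wbar k * ρ (Xa a)).trace = 0 := fun k a => by
    rw [Matrix.trace_mul_comm]; exact horth k _ (hXafix a)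
  have t5 : ∀ k b, (wbar k * ρ (Xd b)).trace = 0 := fun k b => by
    rw [Matrix.trace_mul_comm]; exact horth k _ (hXdfix b)
  have case1 : ∀ k f, Zbar k * Z f = Z f * Zbar k := by
    intro k f
    have h1 := key (wbar k) (ρ (Xd f))
    simp only [t1, t2, t3, t5, honb, mul_ite, ite_mul, mul_one, mul_zero, zero_mul, one_mul,
      ite_smul, zero_smul, smul_zero, Finset.sum_const_zero, Finset.sum_ite_eq,
      Finset.sum_ite_eq', Finset.mem_univ, if_true, add_zero, zero_add, sub_zero, zero_sub,
      smul_smul, ite_self] at h1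
    have hs : ∀ x : ιh, (∑ x_1 : ιw, if x = f then if k = x_1 then c • (Zbar x_1 * Z x) else 0 else 0)
        = if x = f then c • (Zbar k * Z x) else 0 := by
      intro x; split_ifs with h <;> simp
    simp only [hs, Finset.sum_ite_eq, Finset.sum_ite_eq', Finset.mem_univ, if_true] at h1
    exact smul_right_injective _ hc (sub_eq_zero.mp h1)
  have case2 : ∀ k l, Zbar k * Zbar l = Zbar l * Zbar k := by
    intro k l
    have h1 := key (wbar k) (wbar l)
    simp only [t1, t2, t3, t5, honb, mul_ite, ite_mul, mul_one, mul_zero, zero_mul, one_mul,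
      ite_smul, zero_smul, smul_zero, Finset.sum_const_zero, Finset.sum_ite_eq,
      Finset.sum_ite_eq', Finset.mem_univ, if_true, add_zero, zero_add, sub_zero, zero_sub,
      smul_smul, ite_self, one_smul] at h1
    have hs : ∀ x : ιw, (∑ x_1 : ιw, if l = x then if k = x_1 then Zbar x_1 * Zbar x else 0 else 0)
        = if l = x then Zbar k * Zbar x else 0 := by
      intro x; split_ifs with h <;> simp
    simp only [hs, Finset.sum_ite_eq, Finset.sum_ite_eq', Finset.mem_univ, if_true] at h1
    exact sub_eq_zero.mp h1
  -- case 3 : M = ρ (Xd e), N = ρ (Xd f)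
  have case3 : ∀ e f, Z e * Z f - Z f * Z e
      = (2:ℂ) • ∑ x, (killingForm ℂ L (Xa x) ⁅Xd e, Xd f⁆) • Z x := by
    intro e f
    have h1 := key (ρ (Xd e)) (ρ (Xd f))
    simp only [t1, t2, t3, t5, honb, mul_ite, ite_mul, mul_one, mul_zero, zero_mul, one_mul,
      ite_smul, zero_smul, smul_zero, Finset.sum_const_zero, Finset.sum_ite_eq,
      Finset.sum_ite_eq', Finset.mem_univ, if_true, add_zero, zero_add, sub_zero, zero_sub,
      smul_smul, ite_self, one_smul] at h1
    have hlie : ∀ U V : L, ρ U * ρ V - ρ V * ρ U = ρ ⁅U, V⁆ := fun U V => by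
      rw [LieHom.map_lie, Ring.lie_def]
    have hfix : α ⁅Xd f, Xd e⁆ = ⁅Xd f, Xd e⁆ := by
      rw [LieHom.map_lie, hXdfix, hXdfix]
    -- collapse the remaining ite sums
    have hsa : ∀ x : ιh,
        ((∑ x_1 : ιh, if x = e then (c * (ρ (Xd f) * (ρ (Xa x_1) * ρ (Xd x))).trace) • Z x_1 else 0) +
          ∑ x_1 : ιw, if x = e then (c * (ρ (Xd f) * (wbar x_1 * ρ (Xd x))).trace) • Zbar x_1 else 0)
        = if x = e then
            ((∑ x_1 : ιh, (c * (ρ (Xd f) * (ρ (Xa x_1) * ρ (Xd x))).trace) • Z x_1) +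
              ∑ x_1 : ιw, (c * (ρ (Xd f) * (wbar x_1 * ρ (Xd x))).trace) • Zbar x_1) else 0 := by
      intro x; split_ifs <;> simp
    have hsb : ∀ x : ιh,
        (∑ x_1 : ιh, if x = f then if x_1 = e then (c * c) • (Z x_1 * Z x) else 0 else 0)
        = if x = f then (c * c) • (Z e * Z x) else 0 := by
      intro x; split_ifs <;> simp
    simp only [hsa, hsb, Finset.sum_ite_eq', Finset.mem_univ, if_true] at h1
    -- trace identities
    have hS2eq : ∀ i : ιw, c * (ρ (Xd f) * (ρ (Xd e) * wbar i)).trace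
        = c * (ρ (Xd f) * (wbar i * ρ (Xd e))).trace := by
      intro i
      have h0 := horth i ⁅Xd f, Xd e⁆ hfix
      rw [← hlie, sub_mul, Matrix.trace_sub, sub_eq_zero] at h0
      congr 1
      calc (ρ (Xd f) * (ρ (Xd e) * wbar i)).trace
          = (ρ (Xd f) * ρ (Xd e) * wbar i).trace := by rw [mul_assoc]
        _ = (ρ (Xd e) * ρ (Xd f) * wbar i).trace := h0
        _ = (ρ (Xd e) * (ρ (Xd f) * wbar i)).trace := by rw [mul_assoc]
        _ = ((ρ (Xd f) * wbar i) * ρ (Xd e)).trace := by rw [Matrix.trace_mul_comm]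
        _ = (ρ (Xd f) * (wbar i * ρ (Xd e))).trace := by rw [mul_assoc]
    have hS1eq : ∀ x : ιh, c * (ρ (Xd f) * (ρ (Xd e) * ρ (Xa x))).trace
        = c * (ρ (Xd f) * (ρ (Xa x) * ρ (Xd e))).trace
          - c * c * killingForm ℂ L (Xa x) ⁅Xd e, Xd f⁆ := by
      intro x
      have hd : (ρ (Xd f) * (ρ (Xd e) * ρ (Xa x))).trace
          - (ρ (Xd f) * (ρ (Xa x) * ρ (Xd e))).trace
          = - (c * killingForm ℂ L (Xa x) ⁅Xd e, Xd f⁆) := by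
        have e1 : (ρ (Xd f) * (ρ (Xd e) * ρ (Xa x))).trace
            = (ρ (Xa x) * (ρ (Xd f) * ρ (Xd e))).trace := by
          rw [Matrix.trace_mul_comm, mul_assoc, Matrix.trace_mul_comm, mul_assoc]
        have e2 : (ρ (Xd f) * (ρ (Xa x) * ρ (Xd e))).trace
            = (ρ (Xa x) * (ρ (Xd e) * ρ (Xd f))).trace := by
          rw [Matrix.trace_mul_comm, mul_assoc]
        rw [e1, e2, ← Matrix.trace_sub, ← mul_sub, hlie, htr, ← lie_skew (Xd e) (Xd f),
          map_neg, mul_neg, neg_neg]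
      linear_combination c * hd
    simp only [hS1eq, hS2eq, sub_smul, Finset.sum_sub_distrib] at h1
    have hsum : ∑ x : ιh, (c * c * killingForm ℂ L (Xa x) ⁅Xd e, Xd f⁆) • Z x
        = (c * c) • ∑ x : ιh, (killingForm ℂ L (Xa x) ⁅Xd e, Xd f⁆) • Z x := by
      rw [Finset.smul_sum]; exact Finset.sum_congr rfl fun x _ => (smul_smul _ _ _).symm
    rw [hsum] at h1
    have h3 : (c * c) • (Z e * Z f - Z f * Z e)
        = (c * c) • ((2:ℂ) • ∑ x, (killingForm ℂ L (Xa x) ⁅Xd e, Xd f⁆) • Z x) := by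
      rw [← sub_eq_zero, ← h1]
      module
    exact smul_right_injective _ (mul_ne_zero hc hc) h3
  -- the Lie algebra homomorphism
  let φ : L →ₗ[ℂ] Matrix (Fin dB) (Fin dB) ℂ :=
    { toFun := fun X => ∑ a, ((1/2 : ℂ) * killingForm ℂ L (Xa a) X) • Z a
      map_add' := fun X Y => by
        simp [map_add, mul_add, add_smul, Finset.sum_add_distrib]
      map_smul' := fun t X => by
        simp [_root_.map_smul, Finset.smul_sum, smul_smul, mul_left_comm] }
  have hφd : ∀ b, φ (Xd b) = (1/2 : ℂ) • Z b := by
    intro b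
    show (∑ a, ((1/2 : ℂ) * killingForm ℂ L (Xa a) (Xd b)) • Z a) = (1/2 : ℂ) • Z b
    simp [hdual, mul_ite, ite_smul, Finset.sum_ite_eq', Finset.mem_univ]
  have hgen : ∀ e f, φ ⁅Xd e, Xd f⁆ = φ (Xd e) * φ (Xd f) - φ (Xd f) * φ (Xd e) := by
    intro e f
    have h5 : φ ⁅Xd e, Xd f⁆
        = (1/2 : ℂ) • ∑ a, (killingForm ℂ L (Xa a) ⁅Xd e, Xd f⁆) • Z a := by
      show (∑ a, ((1/2 : ℂ) * killingForm ℂ L (Xa a) ⁅Xd e, Xd f⁆) • Z a) = _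
      rw [Finset.smul_sum]
      exact Finset.sum_congr rfl fun a _ => (smul_smul _ _ _).symm
    have h6 : ∑ a, (killingForm ℂ L (Xa a) ⁅Xd e, Xd f⁆) • Z a
        = (1/2 : ℂ) • (Z e * Z f - Z f * Z e) := by
      rw [case3 e f, smul_smul]; norm_num
    rw [h5, h6, hφd, hφd]
    rw [smul_mul_assoc, smul_mul_assoc, mul_smul_comm, mul_smul_comm]
    module
  -- span argument: the `Xd` span the fixed subalgebra
  have hXdindep : LinearIndependent ℂ Xd := by
    rw [Fintype.linearIndependent_iff]
    intro g hg b
    have h7 := congrArg (fun X => killingForm ℂ L (Xa b) X) hg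
    simpa [map_sum, _root_.map_smul, hdual, mul_ite, Finset.sum_ite_eq, Finset.mem_univ] using h7
  have hle : Submodule.span ℂ (Set.range Xd) ≤ Submodule.span ℂ (Set.range Xa) := by
    rw [Submodule.span_le]
    rintro _ ⟨b, rfl⟩
    exact (hspan _).1 (hXdfix b)
  have hspan_eq : Submodule.span ℂ (Set.range Xd) = Submodule.span ℂ (Set.range Xa) :=
    Submodule.eq_of_le_of_finrank_le hle
      (le_of_eq ((finrank_span_eq_card hindep).trans (finrank_span_eq_card hXdindep).symm))
  refine ⟨⟨φ, hφd, ?_⟩, case1, case2⟩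
  intro X Y hX hY
  have hX' : X ∈ Submodule.span ℂ (Set.range Xd) := by rw [hspan_eq]; exact (hspan X).1 hX
  have hY' : Y ∈ Submodule.span ℂ (Set.range Xd) := by rw [hspan_eq]; exact (hspan Y).1 hY
  refine Submodule.span_induction₂ (p := fun x y _ _ => φ ⁅x, y⁆ = φ x * φ y - φ y * φ x)
    ?_ ?_ ?_ ?_ ?_ ?_ ?_ hX' hY'
  · rintro _ _ ⟨e, rfl⟩ ⟨f, rfl⟩
    exact hgen e f
  · intro y _; simp
  · intro x _; simp
  · intro x y z _ _ _ h1 h2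
    rw [add_lie, map_add, map_add, h1, h2]
    noncomm_ring
  · intro x y z _ _ _ h1 h2
    rw [lie_add, map_add, map_add, h1, h2]
    noncomm_ring
  · intro r x y _ _ h
    rw [smul_lie, _root_.map_smul, _root_.map_smul, h]
    simp [smul_sub, smul_mul_assoc, mul_smul_comm]
  · intro r x y _ _ h
    rw [lie_smul, _root_.map_smul, _root_.map_smul, h]
    simp [smul_sub, smul_mul_assoc, mul_smul_comm]
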